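/- (Jacobson's formula in rank one.) Let p be a prime number, k a field of characteristic p, and η ∈ k[[x]] a formal power series. Define Δ : k[[x]] → k[[x]] by Δ(f) = ∂f − η·f, where ∂ is the formal derivative. Then Δ^p(1) = −∂^{p−1}(η) + (−η)^p, where ∂^{p−1} denotes the (p−1)-st iterated formal derivative. -/

import Mathlib

open PowerSeries Finset

namespace JacobsonAux

variable {R : Type*} [CommRing R]

noncomputable def D (η : PowerSeries R) (f : PowerSeries R) : PowerSeries R :=
  f.derivativeFun - η * f

noncomputable def h (η : PowerSeries R) : ℕ → ℕ → PowerSeries R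
  | 0, 0 => 1
  | 0, _+1 => 0
  | j+1, 0 => derivativeFun (h η j 0)
  | j+1, i+1 => derivativeFun (h η j (i+1)) - η * h η j i

theorem derivativeFun_zero : (0 : PowerSeries R).derivativeFun = 0 := by
  ext n
  simp [derivativeFun]

theorem derivativeFun_neg (f : PowerSeries R) : (-f).derivativeFun = -f.derivativeFun := by
  ext n
  simp [derivativeFun]

theorem h_eq_zero_of_lt (η : PowerSeries R) : ∀ j i, j < i → h η j i = 0 := by
  intro j
  induction j with
  | zero => intro i hi; match i, hi with
            | i+1, _ => rfl
  | succ j ih =>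
      intro i hi
      match i, hi with
      | i+1, hi =>
          show derivativeFun (h η j (i+1)) - η * h η j i = 0
          rw [ih (i+1) (by omega), ih i (by omega), derivativeFun_zero, mul_zero, sub_zero]

theorem h_zero_left (η : PowerSeries R) : ∀ j, h η (j+1) 0 = 0 := by
  intro j
  induction j with
  | zero => show derivativeFun (h η 0 0) = 0
            show derivativeFun (1 : PowerSeries R) = 0
            exact derivativeFun_one
  | succ j ih => show derivativeFun (h η (j+1) 0) = 0
                 rw [ih, derivativeFun_zero]

theorem h_diag (η : PowerSeries R) : ∀ j, h η j j = (-η) ^ j := by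
  intro j
  induction j with
  | zero => rfl
  | succ j ih =>
      show derivativeFun (h η j (j+1)) - η * h η j j = (-η) ^ (j+1)
      rw [h_eq_zero_of_lt η j (j+1) (by omega), derivativeFun_zero, ih, pow_succ, zero_sub,
        ← neg_mul, mul_comm]

theorem h_one (η : PowerSeries R) :
    ∀ j, h η (j+1) 1 = -((fun f : PowerSeries R => f.derivativeFun)^[j] η) := by
  intro j
  induction j with
  | zero =>
      show derivativeFun (h η 0 1) - η * h η 0 0 = _
      show derivativeFun (0 : PowerSeries R) - η * 1 = _
      rw [derivativeFun_zero, zero_sub, mul_one, Function.iterate_zero, id_eq]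
  | succ j ih =>
      show derivativeFun (h η (j+1) 1) - η * h η (j+1) 0 = _
      rw [ih, h_zero_left, mul_zero, sub_zero, derivativeFun_neg,
        Function.iterate_succ_apply']

theorem derivativeFun_sum {ι : Type*} (s : Finset ι) (f : ι → PowerSeries R) :
    (∑ i ∈ s, f i).derivativeFun = ∑ i ∈ s, (f i).derivativeFun := by
  classical
  induction s using Finset.induction with
  | empty => simp [derivativeFun_zero]
  | insert a s hx ih =>
                    rw [Finset.sum_insert hx, Finset.sum_insert hx, derivativeFun_add, ih]

theorem expand (η : PowerSeries R) (c : R) :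
    ∀ n, (D (c • η))^[n] 1 = ∑ i ∈ range (n+1), c ^ i • h η n i := by
  intro n
  induction n with
  | zero => simp [h]
  | succ n ih =>
      rw [Function.iterate_succ_apply', ih]
      show derivativeFun _ - (c • η) * _ = _
      rw [derivativeFun_sum]
      have hd : ∀ i, (c ^ i • h η n i).derivativeFun = c ^ i • (h η n i).derivativeFun :=
        fun i => derivativeFun_smul _ _
      simp only [hd]
      have hmul : (c • η) * (∑ i ∈ range (n+1), c ^ i • h η n i)
          = ∑ i ∈ range (n+1), c ^ (i+1) • (η * h η n i) := by
        rw [Finset.mul_sum]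
        refine Finset.sum_congr rfl fun i _ => ?_
        rw [smul_mul_assoc, mul_smul_comm, smul_smul, pow_succ, mul_comm]
      rw [hmul]
      -- RHS: split off i = 0 and reindex
      have hR : ∑ i ∈ range (n+2), c ^ i • h η (n+1) i
          = c ^ 0 • h η (n+1) 0
            + ∑ i ∈ range (n+1), c ^ (i+1) • h η (n+1) (i+1) := by
        rw [Finset.sum_range_succ' (fun i => c ^ i • h η (n+1) i) (n+1)]
        ring_nf
      rw [hR]
      have h0 : h η (n+1) 0 = derivativeFun (h η n 0) := rfl
      have hstep : ∀ i, h η (n+1) (i+1) = derivativeFun (h η n (i+1)) - η * h η n i :=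
        fun i => rfl
      simp only [h0, hstep, smul_sub]
      rw [Finset.sum_sub_distrib]
      have hDer : ∑ i ∈ range (n+1), c ^ i • (h η n i).derivativeFun
          = c ^ 0 • derivativeFun (h η n 0)
            + ∑ i ∈ range (n+1), c ^ (i+1) • (h η n (i+1)).derivativeFun := by
        have e1 : ∑ i ∈ range (n+2), c ^ i • (h η n i).derivativeFun
            = ∑ i ∈ range (n+1), c ^ i • (h η n i).derivativeFun := by
          rw [Finset.sum_range_succ, h_eq_zero_of_lt η n (n+1) (by omega), derivativeFun_zero,
            smul_zero, add_zero]
        rw [← e1, Finset.sum_range_succ' (fun i => c ^ i • (h η n i).derivativeFun) (n+1),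
          add_comm]
      rw [hDer]
      abel

theorem binom (η θ : PowerSeries R) :
    ∀ n, (D (η + θ))^[n] 1
      = ∑ i ∈ range (n+1), (n.choose i) • ((D η)^[i] 1 * (D θ)^[n-i] 1) := by
  intro n
  set u : ℕ → PowerSeries R := fun i => (D η)^[i] 1 with hu
  set v : ℕ → PowerSeries R := fun i => (D θ)^[i] 1 with hv
  induction n with
  | zero => simp [u, v]
  | succ n ih =>
      rw [Function.iterate_succ_apply', ih]
      show derivativeFun _ - (η + θ) * _ = _
      rw [derivativeFun_sum, Finset.mul_sum, ← Finset.sum_sub_distrib]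
      have key : ∀ i ∈ range (n+1),
          ((n.choose i) • (u i * v (n-i))).derivativeFun
            - (η + θ) * ((n.choose i) • (u i * v (n-i)))
          = (n.choose i) • (u (i+1) * v (n-i)) + (n.choose i) • (u i * v (n-i+1)) := by
        intro i _
        have hder : (u i * v (n-i)).derivativeFun
            = (u i).derivativeFun * v (n-i) + u i * (v (n-i)).derivativeFun := by
          rw [derivativeFun_mul]
          rw [smul_eq_mul, smul_eq_mul]; ring
        have hnsmul : ∀ (x : PowerSeries R), ((n.choose i) • x).derivativeFun
            = (n.choose i) • x.derivativeFun := by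
          intro x
          induction (n.choose i) with
          | zero => simp [derivativeFun]
          | succ m ihm => rw [succ_nsmul, succ_nsmul, derivativeFun_add, ihm]
        rw [hnsmul, hder, mul_smul_comm, ← smul_sub, ← smul_add]
        congr 1
        have hu1 : u (i+1) = (u i).derivativeFun - η * u i := by
          show (D η)^[i+1] 1 = _
          rw [Function.iterate_succ_apply']; rfl
        have hv1 : v (n-i+1) = (v (n-i)).derivativeFun - θ * v (n-i) := by
          show (D θ)^[n-i+1] 1 = _
          rw [Function.iterate_succ_apply']; rfl
        rw [hu1, hv1]; ring
      rw [Finset.sum_congr rfl key, Finset.sum_add_distrib]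
      -- now Pascal
      have e2 : ∑ i ∈ range (n+2), ((n+1).choose i) • (u i * v (n+1-i))
          = (∑ i ∈ range (n+1), ((n+1).choose (i+1)) • (u (i+1) * v (n+1-(i+1))))
            + ((n+1).choose 0) • (u 0 * v (n+1-0)) :=
        Finset.sum_range_succ' _ (n+1)
      rw [e2]
      have e3 : ∀ i, (n+1).choose (i+1) = n.choose i + n.choose (i+1) :=
        fun i => Nat.choose_succ_succ n i
      have e4 : ∀ i, n+1-(i+1) = n-i := fun i => Nat.succ_sub_succ n i
      simp only [e3, e4, add_smul, Nat.choose_zero_right, one_smul]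
      rw [Finset.sum_add_distrib]
      have e5 : (∑ i ∈ range (n+1), (n.choose (i+1)) • (u (i+1) * v (n-i)))
            + u 0 * v (n+1-0)
          = ∑ i ∈ range (n+2), (n.choose i) • (u i * v (n+1-i)) := by
        rw [Finset.sum_range_succ' (fun i => (n.choose i) • (u i * v (n+1-i))) (n+1)]
        simp only [Nat.choose_zero_right, one_smul, Nat.succ_sub_succ]
      have e6 : ∑ i ∈ range (n+2), (n.choose i) • (u i * v (n+1-i))
          = ∑ i ∈ range (n+1), (n.choose i) • (u i * v (n+1-i)) := by
        rw [Finset.sum_range_succ, Nat.choose_succ_self, zero_smul, add_zero]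
      have e7 : ∀ i, n + 1 - i = n - i + 1 → True := fun _ _ => trivial
      -- target rearurange
      rw [add_assoc, e5, e6]
      congr 1
      refine Finset.sum_congr rfl fun i hi => ?_
      have : n + 1 - i = n - i + 1 := by
        have : i ≤ n := by simpa [Nat.lt_succ_iff] using hi
        omega
      rw [this]

theorem D_add_pow (p : ℕ) (hp : p.Prime) [CharP R p] (η θ : PowerSeries R) :
    (D (η + θ))^[p] 1 = (D η)^[p] 1 + (D θ)^[p] 1 := by
  rw [binom]
  have h0p : ({0, p} : Finset ℕ) ⊆ range (p+1) := by
    intro x hx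
    simp only [Finset.mem_insert, Finset.mem_singleton] at hx
    simp only [Finset.mem_range]
    omega
  have hz : ∀ i ∈ range (p+1), i ∉ ({0, p} : Finset ℕ) →
      (p.choose i) • ((D η)^[i] 1 * (D θ)^[p-i] 1) = 0 := by
    intro i hi hni
    simp only [Finset.mem_insert, Finset.mem_singleton] at hni
    push_neg at hni
    simp only [Finset.mem_range] at hi
    obtain ⟨m, hm⟩ := hp.dvd_choose_self hni.1 (by omega)
    rw [hm, mul_smul, ← Nat.cast_smul_eq_nsmul R, CharP.cast_eq_zero, zero_smul]
  rw [← Finset.sum_subset h0p hz, Finset.sum_pair (show (0:ℕ) ≠ p from fun e => hp.ne_zero e.symm)]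
  simp only [Nat.choose_zero_right, Nat.choose_self, one_smul, Function.iterate_zero, id_eq,
    Nat.sub_zero, Nat.sub_self, one_mul, mul_one]
  exact add_comm _ _

theorem map_derivativeFun {S : Type*} [CommRing S] (φ : R →+* S) (f : PowerSeries R) :
    PowerSeries.map φ f.derivativeFun = (PowerSeries.map φ f).derivativeFun := by
  ext n
  simp [derivativeFun, PowerSeries.coeff_map, coeff_derivative, map_mul, map_add, map_natCast, map_one]

theorem map_h {S : Type*} [CommRing S] (φ : R →+* S) (η : PowerSeries R) :
    ∀ j i, PowerSeries.map φ (h η j i) = h (PowerSeries.map φ η) j i := by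
  intro j
  induction j with
  | zero =>
      intro i
      match i with
      | 0 => show PowerSeries.map φ 1 = (1 : PowerSeries S); exact map_one _
      | i+1 => show PowerSeries.map φ 0 = (0 : PowerSeries S); exact map_zero _
  | succ j ih =>
      intro i
      match i with
      | 0 =>
          show PowerSeries.map φ (derivativeFun (h η j 0)) = derivativeFun (h _ j 0)
          rw [map_derivativeFun, ih 0]
      | i+1 =>
          show PowerSeries.map φ (derivativeFun (h η j (i+1)) - η * h η j i) = _
          rw [map_sub, map_mul, map_derivativeFun, ih, ih]
          rfl

noncomputable def coeffC {k : Type*} [CommRing k] (t : ℕ) :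
    PowerSeries (Polynomial k) →+ PowerSeries k where
  toFun F := PowerSeries.mk fun m => ((PowerSeries.coeff m) F).coeff t
  map_zero' := by ext m; simp
  map_add' F G := by ext m; simp

theorem coeffC_Cmul_map {k : Type*} [CommRing k] (t : ℕ) (q : Polynomial k)
    (f : PowerSeries k) :
    coeffC t (PowerSeries.C q * PowerSeries.map (Polynomial.C : k →+* Polynomial k) f)
      = PowerSeries.C (q.coeff t) * f := by
  ext m
  simp only [coeffC, AddMonoidHom.coe_mk, ZeroHom.coe_mk, PowerSeries.coeff_mk,
    PowerSeries.coeff_C_mul, PowerSeries.coeff_map, Polynomial.coeff_mul_C]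

theorem scaled (p : ℕ) (hp : p.Prime) [CharP R p] (η : PowerSeries R) (c : R) :
    ∑ i ∈ range (p+1), (c+1) ^ i • h η p i
      = ∑ i ∈ range (p+1), c ^ i • h η p i + ∑ i ∈ range (p+1), (1:R) ^ i • h η p i := by
  have key := D_add_pow p hp (c • η) η
  rw [show c • η + η = (c+1) • η by rw [add_smul, one_smul]] at key
  rw [expand η (c+1) p, expand η c p,
    show (D η)^[p] 1 = ∑ i ∈ range (p+1), (1:R) ^ i • h η p i by
      rw [← expand η 1 p, one_smul]] at key
  exact key

theorem rel {k : Type*} [Field k] (p : ℕ) (hp : p.Prime) [CharP k p]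
    (η : PowerSeries k) (t : ℕ) (ht : 1 ≤ t) (ht2 : t ≤ p) :
    ∑ i ∈ range (p+1), PowerSeries.C ((i.choose t : k)) * h η p i = h η p t := by
  haveI : CharP (Polynomial k) p := charP_of_injective_ringHom Polynomial.C_injective p
  have hφ : True := trivial
  have key := scaled p hp (PowerSeries.map (Polynomial.C : k →+* Polynomial k) η) (Polynomial.X : Polynomial k)
  simp only [smul_eq_C_mul, ← map_h (Polynomial.C : k →+* Polynomial k) η p] at key
  have key2 := congrArg (coeffC t) key
  rw [map_add (coeffC t)] at key2
  rw [map_sum (coeffC t) (fun x => PowerSeries.C ((Polynomial.X + 1) ^ x)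
        * PowerSeries.map (Polynomial.C : k →+* Polynomial k) (h η p x)) (range (p+1)),
      map_sum (coeffC t) (fun x => PowerSeries.C ((Polynomial.X) ^ x)
        * PowerSeries.map (Polynomial.C : k →+* Polynomial k) (h η p x)) (range (p+1)),
      map_sum (coeffC t) (fun x => PowerSeries.C ((1 : Polynomial k) ^ x)
        * PowerSeries.map (Polynomial.C : k →+* Polynomial k) (h η p x)) (range (p+1))] at key2
  simp only [coeffC_Cmul_map] at key2
  simp only [Polynomial.coeff_X_add_one_pow, one_pow, Polynomial.coeff_X_pow,
    Polynomial.coeff_one] at key2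
  rw [if_neg (by omega : ¬ t = 0)] at key2
  simp only [map_zero, zero_mul, Finset.sum_const_zero, add_zero] at key2
  rw [key2]
  have : ∀ i ∈ range (p+1),
      PowerSeries.C (if t = i then (1:k) else 0) * h η p i
        = if t = i then h η p i else 0 := by
    intro i _
    split_ifs with hti
    · rw [map_one, one_mul]
    · rw [map_zero, zero_mul]
  rw [Finset.sum_congr rfl this, Finset.sum_ite_eq]
  rw [if_pos (by simp only [Finset.mem_range]; omega)]

theorem middle {k : Type*} [Field k] (p : ℕ) (hp : p.Prime) [CharP k p]
    (η : PowerSeries k) :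
    ∀ d t, 1 ≤ t → t + 1 < p → p - (t+1) ≤ d → h η p (t+1) = 0 := by
  intro d
  induction d with
  | zero => intro t h1 h2 h3; omega
  | succ d ih =>
      intro t h1 h2 h3
      have hrel := rel p hp η t h1 (by omega)
      have hsplit : ∑ i ∈ range (p+1), PowerSeries.C ((i.choose t : k)) * h η p i
          = ∑ i ∈ ({t, t+1} : Finset ℕ), PowerSeries.C ((i.choose t : k)) * h η p i := by
        symm
        apply Finset.sum_subset
        · intro x hx
          simp only [Finset.mem_insert, Finset.mem_singleton] at hx
          simp only [Finset.mem_range]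
          omega
        · intro x hx hnx
          simp only [Finset.mem_insert, Finset.mem_singleton] at hnx
          push_neg at hnx
          simp only [Finset.mem_range] at hx
          rcases lt_or_ge x t with hlt | hge
          · rw [Nat.choose_eq_zero_of_lt hlt, Nat.cast_zero, map_zero, zero_mul]
          · rcases eq_or_lt_of_le (show x ≤ p by omega) with hxp | hxp
            · subst hxp
              have hc : ((x.choose t : k)) = 0 := by
                obtain ⟨m, hm⟩ := hp.dvd_choose_self (by omega : t ≠ 0) (by omega)
                rw [hm, Nat.cast_mul, CharP.cast_eq_zero, zero_mul]
              rw [hc, map_zero, zero_mul]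
            · have hx0 : h η p x = 0 := by
                have hxx := ih (x-1) (by omega) (by omega) (by omega)
                have : x - 1 + 1 = x := by omega
                rwa [this] at hxx
              rw [hx0, mul_zero]
      rw [hsplit, Finset.sum_pair (by omega : t ≠ t+1), Nat.choose_self, Nat.cast_one,
        map_one, one_mul] at hrel
      have h2' : PowerSeries.C (((t+1).choose t : k)) * h η p (t+1) = 0 :=
        (add_eq_left).mp hrel
      rw [Nat.choose_succ_self_right] at h2'
      have hne : ((t+1 : ℕ) : k) ≠ 0 := by
        intro hzero
        rw [CharP.cast_eq_zero_iff k p] at hzero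
        have := Nat.le_of_dvd (by omega) hzero
        omega
      rcases mul_eq_zero.mp h2' with hc | hh
  -- C injective
      · exact absurd (by simpa using congrArg (PowerSeries.constantCoeff) hc) hne
      · exact hh

end JacobsonAux

open JacobsonAux


/-- Jacobson's formula in rank one: if `k` is a field of prime characteristic `p`,
`η ∈ k[[x]]`, and `Δ(f) = ∂f − η·f`, then `Δ^p(1) = −∂^{p−1}(η) + (−η)^p`. -/
theorem jacobson_formula_rank_one
    (p : ℕ) (hp : p.Prime) (k : Type*) [Field k] [CharP k p]
    (η : PowerSeries k) (Δ : PowerSeries k → PowerSeries k)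
    (hΔ : ∀ f : PowerSeries k, Δ f = f.derivativeFun - η * f) :
    Δ^[p] 1 = -((fun f : PowerSeries k => f.derivativeFun)^[p - 1] η) + (-η) ^ p := by
  have hfun : Δ = D η := by funext f; rw [hΔ]; rfl
  obtain ⟨q, hq⟩ : ∃ q, p = q + 1 := ⟨p - 1, by have := hp.two_le; omega⟩
  have hq1 : 2 ≤ q + 1 := by rw [← hq]; exact hp.two_le
  subst hq
  have hex := expand η 1 (q+1)
  rw [one_smul] at hex
  rw [hfun, hex]
  simp only [one_pow, one_smul]
  have hsub : ({1, q+1} : Finset ℕ) ⊆ range (q+2) := by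
    intro x hx
    simp only [Finset.mem_insert, Finset.mem_singleton] at hx
    simp only [Finset.mem_range]
    omega
  have hz : ∀ i ∈ range (q+2), i ∉ ({1, q+1} : Finset ℕ) → h η (q+1) i = 0 := by
    intro i hi hni
    simp only [Finset.mem_insert, Finset.mem_singleton] at hni
    push_neg at hni
    simp only [Finset.mem_range] at hi
    match i, hni with
    | 0, _ => exact h_zero_left η q
    | i+1, hni =>
        exact middle (q+1) hp η (q+1) i (by omega) (by omega) (by omega)
  rw [← Finset.sum_subset hsub hz, Finset.sum_pair (by omega : (1:ℕ) ≠ q+1)]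
  rw [h_one η q, h_diag η (q+1)]
  simp only [Nat.add_sub_cancel]
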